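/- Let X be a finite set and f: X → X a map with a the number of periodic orbits and b the number of periodic points of f. Then the zeta function ζ_f(z) = ∏_γ (1 - z^{#γ})⁻¹ (product over periodic orbits) satisfies the functional equation ζ_f(1/z) = (-1)^a · z^b · ζ_f(z) as rational functions. -/
import Mathlib


/-- Functional equation `ζ_f(1/z) = (-1)^a z^b ζ_f(z)` for the zeta function
`ζ_f(z) = ∏_γ (1 - z^{#γ})⁻¹` of a self-map of a finite set, where `a` is the number of
periodic orbits and `b` the number of periodic points. -/
theorem zeta_finite_set_functional_equation {X : Type*} [Fintype X] (f : X → X)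
    (z : ℂ) (hz : z ≠ 0) :
    (∏ᶠ (s : Set X) (_ : s ∈ {s : Set X |
        ∃ x : X, (∃ n : ℕ, 1 ≤ n ∧ f^[n] x = x) ∧ s = {y : X | ∃ k : ℕ, f^[k] x = y}}),
      (1 - z⁻¹ ^ s.ncard)⁻¹) =
    (-1) ^ ({s : Set X |
        ∃ x : X, (∃ n : ℕ, 1 ≤ n ∧ f^[n] x = x) ∧ s = {y : X | ∃ k : ℕ, f^[k] x = y}}.ncard) *
      z ^ ({x : X | ∃ n : ℕ, 1 ≤ n ∧ f^[n] x = x}.ncard) *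
      ∏ᶠ (s : Set X) (_ : s ∈ {s : Set X |
          ∃ x : X, (∃ n : ℕ, 1 ≤ n ∧ f^[n] x = x) ∧ s = {y : X | ∃ k : ℕ, f^[k] x = y}}),
        (1 - z ^ s.ncard)⁻¹ := by
  classical
  set P : Set X := {x : X | ∃ n : ℕ, 1 ≤ n ∧ f^[n] x = x} with hP
  set S : Set (Set X) := {s : Set X |
      ∃ x : X, (∃ n : ℕ, 1 ≤ n ∧ f^[n] x = x) ∧ s = {y : X | ∃ k : ℕ, f^[k] x = y}} with hSdef
  -- orbit equality lemma
  have Oeq : ∀ x y : X, x ∈ P → (∃ k : ℕ, f^[k] x = y) →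
      ({w : X | ∃ k : ℕ, f^[k] x = w} = {w : X | ∃ k : ℕ, f^[k] y = w}) := by
    rintro x y ⟨n, hn1, hn⟩ ⟨k, hk⟩
    have hkle : k ≤ n * k := Nat.le_mul_of_pos_left k (by omega)
    have hx' : f^[n * k] x = x := by
      rw [Function.iterate_mul]; exact Function.iterate_fixed hn k
    ext w
    constructor
    · rintro ⟨j, hj⟩
      refine ⟨n * k - k + j, ?_⟩
      rw [← hk, ← Function.iterate_add_apply]
      have : n * k - k + j + k = j + n * k := by omega
      rw [this, Function.iterate_add_apply, hx', hj]
    · rintro ⟨j, hj⟩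
      exact ⟨j + k, by rw [Function.iterate_add_apply, hk, hj]⟩
  -- periodic points are closed under orbits
  have perO : ∀ x y : X, x ∈ P → (∃ k : ℕ, f^[k] x = y) → y ∈ P := by
    rintro x y ⟨n, hn1, hn⟩ ⟨k, hk⟩
    refine ⟨n, hn1, ?_⟩
    rw [← hk, ← Function.iterate_add_apply, add_comm, Function.iterate_add_apply, hn]
  have hSfin : S.Finite := Set.toFinite S
  set F : Finset (Set X) := hSfin.toFinset with hF
  have hfp : ∀ g : Set X → ℂ, (∏ᶠ s ∈ S, g s) = ∏ s ∈ F, g s := by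
    intro g
    rw [hF, ← finprod_mem_coe_finset, Set.Finite.coe_toFinset]
  rw [hfp, hfp]
  -- factorwise identity
  have factor : ∀ n : ℕ, (1 - z⁻¹ ^ n)⁻¹ = -1 * z ^ n * (1 - z ^ n)⁻¹ := by
    intro n
    have hw : z ^ n ≠ 0 := pow_ne_zero _ hz
    have h1 : (1 : ℂ) - z⁻¹ ^ n = -(z ^ n)⁻¹ * (1 - z ^ n) := by
      rw [inv_pow, neg_mul, mul_sub, mul_one, inv_mul_cancel₀ hw, neg_sub]
    rw [h1, mul_inv, inv_neg, inv_inv]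
    ring
  have step1 : (∏ s ∈ F, (1 - z⁻¹ ^ s.ncard)⁻¹)
      = ∏ s ∈ F, (-1 * z ^ s.ncard * (1 - z ^ s.ncard)⁻¹) :=
    Finset.prod_congr rfl fun s _ => factor s.ncard
  rw [step1, Finset.prod_mul_distrib, Finset.prod_mul_distrib, Finset.prod_const,
    Finset.prod_pow_eq_pow_sum]
  -- card equalities
  have hcard : F.card = S.ncard := (Set.ncard_eq_toFinset_card S hSfin).symm
  have hsum : (∑ s ∈ F, s.ncard) = P.ncard := by
    set g : Set X → Finset X := fun s => s.toFinite.toFinset with hg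
    have hdisj : ∀ s ∈ F, ∀ t ∈ F, s ≠ t → Disjoint (g s) (g t) := by
      intro s hs t ht hst
      rw [hF, Set.Finite.mem_toFinset] at hs ht
      obtain ⟨x, hx, rfl⟩ := hs
      obtain ⟨x', hx', rfl⟩ := ht
      rw [Finset.disjoint_left]
      intro y hys hyt
      rw [hg] at hys hyt
      simp only [Set.Finite.mem_toFinset, Set.mem_setOf_eq] at hys hyt
      exact hst ((Oeq x y hx hys).trans (Oeq x' y hx' hyt).symm)
    have hunion : F.biUnion g = P.toFinite.toFinset := by
      ext y
      simp only [Finset.mem_biUnion, hg, Set.Finite.mem_toFinset]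
      constructor
      · rintro ⟨s, hs, hys⟩
        rw [hF, Set.Finite.mem_toFinset] at hs
        obtain ⟨x, hx, rfl⟩ := hs
        exact perO x y hx hys
      · intro hy
        refine ⟨{w : X | ∃ k : ℕ, f^[k] y = w}, ?_, ⟨0, rfl⟩⟩
        rw [hF, Set.Finite.mem_toFinset]
        exact ⟨y, hy, rfl⟩
    calc (∑ s ∈ F, s.ncard) = ∑ s ∈ F, (g s).card :=
          Finset.sum_congr rfl fun s _ => Set.ncard_eq_toFinset_card s s.toFinite
      _ = (F.biUnion g).card := (Finset.card_biUnion hdisj).symm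
      _ = P.ncard := by rw [hunion, ← Set.ncard_eq_toFinset_card P P.toFinite]
  rw [hcard, hsum]
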